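/- Let α, β, γ, δ ∈ ℝ with αδ + βγ = 1, and let A, c ∈ ℂ with δ + iγc ≠ 0. Define c' = (αc + iβ)/(δ + iγc) and A' = A·(δ + iγc)⁴. Then c' + c̄' = (c + c̄)/|δ + iγc|², and |A'|²·(c' + c̄')⁴ = |A|²·(c + c̄)⁴. In particular, Re(c') is positive, zero, or negative exactly when Re(c) is positive, zero, or negative, respectively. -/

import Mathlib

open Complex

/-- **Invariant of the Ehlers action on the parameters `(A, c)`:** with
`c' = (αc + iβ)/(δ + iγc)` and `A' = A(δ + iγc)⁴` (`αδ + βγ = 1`, `δ + iγc ≠ 0`),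
one has `c' + c̄' = (c + c̄)/|δ + iγc|²` and `|A'|²(c' + c̄')⁴ = |A|²(c + c̄)⁴`;
in particular `Re c'` is positive, zero, or negative exactly when `Re c` is. -/
theorem ehlers_action_invariant (α β γ δ : ℝ) (h : α * δ + β * γ = 1)
    (A c : ℂ) (hc : (δ : ℂ) + I * γ * c ≠ 0) :
    ((α * c + I * β) / ((δ : ℂ) + I * γ * c)
        + starRingEnd ℂ ((α * c + I * β) / ((δ : ℂ) + I * γ * c))
      = (c + starRingEnd ℂ c) / ((‖(δ : ℂ) + I * γ * c‖ ^ 2 : ℝ) : ℂ))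
    ∧ ((‖A * ((δ : ℂ) + I * γ * c) ^ 4‖ ^ 2 : ℝ) : ℂ)
        * ((α * c + I * β) / ((δ : ℂ) + I * γ * c)
            + starRingEnd ℂ ((α * c + I * β) / ((δ : ℂ) + I * γ * c))) ^ 4
      = ((‖A‖ ^ 2 : ℝ) : ℂ) * (c + starRingEnd ℂ c) ^ 4
    ∧ (0 < ((α * c + I * β) / ((δ : ℂ) + I * γ * c)).re ↔ 0 < c.re)
    ∧ (((α * c + I * β) / ((δ : ℂ) + I * γ * c)).re = 0 ↔ c.re = 0)
    ∧ (((α * c + I * β) / ((δ : ℂ) + I * γ * c)).re < 0 ↔ c.re < 0) := by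
  set d : ℂ := (δ : ℂ) + I * γ * c with hd
  have hdc : starRingEnd ℂ d ≠ 0 := by simpa using hc
  have habs : ((‖d‖ ^ 2 : ℝ) : ℂ) = d * starRingEnd ℂ d := by
    rw [← Complex.normSq_eq_norm_sq]
    exact_mod_cast (Complex.mul_conj d).symm
  have habsne : ((‖d‖ ^ 2 : ℝ) : ℂ) ≠ 0 := by
    rw [habs]; exact mul_ne_zero hc hdc
  have habspos : (0:ℝ) < ‖d‖ ^ 2 := by
    exact pow_pos (norm_pos_iff.mpr hc) 2
  have h' : (α:ℂ) * δ + β * γ = 1 := by exact_mod_cast congrArg (fun x:ℝ => (x:ℂ)) h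
  have key : ((α:ℂ) * c + I * β) * starRingEnd ℂ d + starRingEnd ℂ ((α:ℂ) * c + I * β) * d
      = c + starRingEnd ℂ c := by
    simp only [hd, map_add, map_mul, Complex.conj_I, Complex.conj_ofReal]
    linear_combination (c + starRingEnd ℂ c) * h' - (β:ℂ)*γ*(c + starRingEnd ℂ c) * Complex.I_sq
  have e1 : (α * c + I * β) / d + starRingEnd ℂ ((α * c + I * β) / d)
      = (c + starRingEnd ℂ c) / ((‖d‖ ^ 2 : ℝ) : ℂ) := by
    rw [map_div₀, div_add_div _ _ hc hdc, mul_comm d (starRingEnd ℂ ((α:ℂ) * c + I * β)), key, habs]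
  have e2 : ((‖A * d ^ 4‖ ^ 2 : ℝ) : ℂ)
        * ((α * c + I * β) / d + starRingEnd ℂ ((α * c + I * β) / d)) ^ 4
      = ((‖A‖ ^ 2 : ℝ) : ℂ) * (c + starRingEnd ℂ c) ^ 4 := by
    have habs4 : ((‖A * d ^ 4‖ ^ 2 : ℝ) : ℂ)
        = ((‖A‖ ^ 2 : ℝ) : ℂ) * ((‖d‖ ^ 2 : ℝ) : ℂ) ^ 4 := by
      push_cast [norm_mul, norm_pow]; ring
    rw [e1, habs4, div_pow, mul_assoc, mul_div_cancel₀ _ (pow_ne_zero 4 habsne)]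
  have hre : ((α * c + I * β) / d).re = c.re / (‖d‖ ^ 2) := by
    have := congrArg Complex.re e1
    rw [Complex.add_re, Complex.conj_re, Complex.div_ofReal_re, Complex.add_re,
      Complex.conj_re] at this
    have h2 : (c.re + c.re) / ‖d‖ ^ 2
        = c.re / ‖d‖ ^ 2 + c.re / ‖d‖ ^ 2 := add_div _ _ _
    linarith
  refine ⟨e1, e2, ?_, ?_, ?_⟩
  · rw [hre, div_pos_iff]
    constructor
    · rintro (⟨h1, _⟩ | ⟨_, h2⟩); exact h1; linarith
    · intro h1; exact Or.inl ⟨h1, habspos⟩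
  · rw [hre, div_eq_zero_iff]
    constructor
    · rintro (h1 | h2); exact h1; linarith
    · exact Or.inl
  · rw [hre, div_neg_iff]
    constructor
    · rintro (⟨_, h2⟩ | ⟨h1, _⟩); linarith; exact h1
    · intro h1; exact Or.inr ⟨h1, habspos⟩
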